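/- Let Z be a real normed space and let D_k, E_k ⊆ Z (k ∈ ℕ) and A, B ⊆ Z be subsets such that property (DC1) holds for A × B with respect to (D_k × E_k): for each (y, z) ∈ A × B there is a sequence (ỹ_k, z̃_k) with (ỹ_k, z̃_k) ∈ D_k × E_k for each k and (y, z) = Δ-lim_{k→∞} (ỹ_k, z̃_k). Suppose there exists z ∈ A ∩ B, and suppose for each k ∈ ℕ the pair (y_k, z_k) ∈ D_k × E_k is a global minimizer of the functional (y, z) ↦ ‖y − z‖_Z² over D_k × E_k. Then ‖y_k − z_k‖_Z → 0 as k → ∞. -/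

import Mathlib

open Filter Topology

/-- Weak convergence of a sequence in a normed space: `f (y k) → f a` for every
continuous linear functional `f`. -/
def WeakConvergesTo {Z : Type*} [NormedAddCommGroup Z] [NormedSpace ℝ Z]
    (y : ℕ → Z) (a : Z) : Prop :=
  ∀ f : StrongDual ℝ Z, Tendsto (fun k => f (y k)) atTop (𝓝 (f a))

/-- Data convergence: `y_k ⇀ a`, `z_k ⇀ b`, and `y_k - z_k → a - b` strongly. -/
def DataConvergesTo {Z : Type*} [NormedAddCommGroup Z] [NormedSpace ℝ Z]
    (y z : ℕ → Z) (a b : Z) : Prop :=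
  WeakConvergesTo y a ∧ WeakConvergesTo z b ∧
    Tendsto (fun k => ‖(y k - z k) - (a - b)‖) atTop (𝓝 0)

/-- (DC1): every point of `D × E` is a data limit of a sequence of points of `D_k × E_k`. -/
def DC1 {Z : Type*} [NormedAddCommGroup Z] [NormedSpace ℝ Z]
    (D E : Set Z) (Dk Ek : ℕ → Set Z) : Prop :=
  ∀ a ∈ D, ∀ b ∈ E, ∃ y z : ℕ → Z,
    (∀ k, y k ∈ Dk k ∧ z k ∈ Ek k) ∧ DataConvergesTo y z a b

/-- (DC2): data limits of subsequences of points of `D_k × E_k` belong to `D × E`. -/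
def DC2 {Z : Type*} [NormedAddCommGroup Z] [NormedSpace ℝ Z]
    (D E : Set Z) (Dk Ek : ℕ → Set Z) : Prop :=
  ∀ kj : ℕ → ℕ, StrictMono kj → ∀ (y z : ℕ → Z) (a b : Z),
    (∀ j, y j ∈ Dk (kj j) ∧ z j ∈ Ek (kj j)) →
    DataConvergesTo y z a b → a ∈ D ∧ b ∈ E

/-- If (DC1) holds for `A × B` with respect to `D_k × E_k`, there is some
`z ∈ A ∩ B`, and `(y_k, z_k)` is a global minimizer of `(y, z) ↦ ‖y - z‖²` over
`D_k × E_k` for every `k`, then `‖y_k - z_k‖ → 0`. -/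
theorem statement8 {Z : Type*} [NormedAddCommGroup Z] [NormedSpace ℝ Z]
    (A B : Set Z) (Dk Ek : ℕ → Set Z)
    (hDC1 : DC1 A B Dk Ek)
    (z : Z) (hz : z ∈ A ∩ B)
    (yk zk : ℕ → Z)
    (hmin : ∀ k, yk k ∈ Dk k ∧ zk k ∈ Ek k ∧
      ∀ y' ∈ Dk k, ∀ z' ∈ Ek k, ‖yk k - zk k‖ ^ 2 ≤ ‖y' - z'‖ ^ 2) :
    Tendsto (fun k => ‖yk k - zk k‖) atTop (𝓝 0) := by
  obtain ⟨ty, tz, hmem, _, _, hconv⟩ := hDC1 z hz.1 z hz.2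
  simp only [sub_self, sub_zero] at hconv
  refine squeeze_zero (fun k => norm_nonneg _) (fun k => ?_) hconv
  have h := (hmin k).2.2 (ty k) (hmem k).1 (tz k) (hmem k).2
  nlinarith [norm_nonneg (yk k - zk k), norm_nonneg (ty k - tz k)]
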